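/- Let Ω_N denote the uniform probability space of perfect matchings of the complete graph K_N (N even). For a partial matching M of K_N, let A_M^N be the event that the random perfect matching contains M. Then for any collection 𝓜 of partial matchings of K_N (viewed inside K_{N+2} via the canonical embedding of vertex sets), Pr(∧_{M∈𝓜} ¬A_M^N) ≤ Pr(∧_{M∈𝓜} ¬A_M^{N+2}). -/

import Mathlib

/-- A perfect matching of `K_N`, modeled as a fixed-point-free involution of `Fin N`. -/
def IsPM {N : ℕ} (f : Equiv.Perm (Fin N)) : Prop :=
  ∀ x, f x ≠ x ∧ f (f x) = x

/-- A partial matching of `K_N`: a finite set of edges (ordered pairs with distinct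
endpoints) which are pairwise vertex-disjoint. -/
def IsPartialMatching {N : ℕ} (M : Finset (Fin N × Fin N)) : Prop :=
  (∀ p ∈ M, p.1 ≠ p.2) ∧
  ∀ p ∈ M, ∀ q ∈ M, p ≠ q → p.1 ≠ q.1 ∧ p.1 ≠ q.2 ∧ p.2 ≠ q.1 ∧ p.2 ≠ q.2

/-- The perfect matching `f` extends the partial matching `M`. -/
def Extends {N : ℕ} (f : Equiv.Perm (Fin N)) (M : Finset (Fin N × Fin N)) : Prop :=
  ∀ p ∈ M, f p.1 = p.2

/-- The canonical embedding of edges of `K_N` into `K_{N+2}`. -/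
def embedEdge {N : ℕ} (p : Fin N × Fin N) : Fin (N + 2) × Fin (N + 2) :=
  (p.1.castLE (Nat.le_add_right N 2), p.2.castLE (Nat.le_add_right N 2))

namespace MMA

open Equiv

variable {N : ℕ}

def emb (x : Fin N) : Fin (N + 2) := x.castLE (Nat.le_add_right N 2)

@[simp] lemma emb_val (x : Fin N) : (emb x).val = x.val := rfl

lemma emb_inj : Function.Injective (emb (N := N)) := fun x y h =>
  Fin.ext (by simpa using congrArg Fin.val h)

def va : Fin (N + 2) := ⟨N, by omega⟩
def vb : Fin (N + 2) := ⟨N + 1, by omega⟩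

lemma emb_ne_va (x : Fin N) : emb x ≠ va := by
  intro h
  have := congrArg Fin.val h
  have hx := x.isLt
  simp [va] at this; omega

lemma emb_ne_vb (x : Fin N) : emb x ≠ vb := by
  intro h
  have := congrArg Fin.val h
  have hx := x.isLt
  simp [vb] at this; omega

lemma va_ne_vb : (va : Fin (N+2)) ≠ vb := by
  intro h; have := congrArg Fin.val h; simp [va, vb] at this

def ext0 (f : Perm (Fin N)) : Fin (N + 2) → Fin (N + 2) := fun x =>
  if h : x.val < N then emb (f ⟨x.val, h⟩) else if x.val = N then vb else va

lemma ext0_emb (f : Perm (Fin N)) (x : Fin N) : ext0 f (emb x) = emb (f x) := by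
  unfold ext0
  rw [dif_pos (show (emb x).val < N from x.isLt)]
  congr 1

@[simp] lemma ext0_va (f : Perm (Fin N)) : ext0 f va = vb := by
  unfold ext0; rw [dif_neg (by simp [va])]; simp [va]

@[simp] lemma ext0_vb (f : Perm (Fin N)) : ext0 f vb = va := by
  unfold ext0; rw [dif_neg (by simp [vb])]; simp [vb]

lemma cases3 (x : Fin (N + 2)) : (∃ y : Fin N, x = emb y) ∨ x = va ∨ x = vb := by
  rcases lt_trichotomy x.val N with h | h | h
  · exact Or.inl ⟨⟨x.val, h⟩, Fin.ext rfl⟩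
  · exact Or.inr (Or.inl (Fin.ext h))
  · refine Or.inr (Or.inr (Fin.ext ?_))
    have := x.isLt; simp [vb]; omega

lemma ext0_invol {f : Perm (Fin N)} (hf : IsPM f) : Function.Involutive (ext0 f) := by
  intro x
  rcases cases3 x with ⟨y, rfl⟩ | rfl | rfl
  · rw [ext0_emb, ext0_emb, (hf y).2]
  · rw [ext0_va, ext0_vb]
  · rw [ext0_vb, ext0_va]

def g0 (f : Perm (Fin N)) (hf : IsPM f) : Perm (Fin (N + 2)) :=
  Function.Involutive.toPerm (ext0 f) (ext0_invol hf)

@[simp] lemma g0_apply (f : Perm (Fin N)) (hf : IsPM f) (x) : g0 f hf x = ext0 f x := rfl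

lemma isPM_g0 {f : Perm (Fin N)} (hf : IsPM f) : IsPM (g0 f hf) := by
  intro x
  refine ⟨?_, ext0_invol hf x⟩
  rcases cases3 x with ⟨y, rfl⟩ | rfl | rfl
  · rw [g0_apply, ext0_emb]
    intro h; exact (hf y).1 (emb_inj h)
  · simpa using va_ne_vb.symm
  · simpa using va_ne_vb

lemma isPM_conj {n : ℕ} (σ g : Perm (Fin n)) (hg : IsPM g) : IsPM (σ * g * σ⁻¹) := by
  intro x
  constructor
  · intro h
    simp only [Perm.mul_apply] at h
    have h2 : g (σ⁻¹ x) = σ⁻¹ x := by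
      have := congrArg (⇑σ⁻¹) h
      simpa using this
    exact (hg (σ⁻¹ x)).1 h2
  · simp only [Perm.mul_apply, Perm.coe_inv, symm_apply_apply, (hg _).2, apply_symm_apply]

def HH (f : Perm (Fin N)) (hf : IsPM f) (k : Fin (N + 1)) : Perm (Fin (N + 2)) :=
  if hk : k.val < N then
    Equiv.swap va (emb ⟨k.val, hk⟩) * g0 f hf * Equiv.swap va (emb ⟨k.val, hk⟩)
  else g0 f hf

lemma isPM_HH (f : Perm (Fin N)) (hf : IsPM f) (k : Fin (N + 1)) : IsPM (HH f hf k) := by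
  unfold HH
  split
  · next hk =>
    have h := isPM_conj (Equiv.swap va (emb ⟨k.val, hk⟩)) (g0 f hf) (isPM_g0 hf)
    rwa [Equiv.swap_inv] at h
  · exact isPM_g0 hf

section HHvals

variable (f : Perm (Fin N)) (hf : IsPM f) (k : Fin (N + 1)) (hk : k.val < N)

lemma HH_a : HH f hf k va = emb (f ⟨k.val, hk⟩) := by
  set j : Fin N := ⟨k.val, hk⟩
  unfold HH
  rw [dif_pos hk]
  simp only [Perm.mul_apply, Equiv.swap_apply_left, g0_apply, ext0_emb]
  refine Equiv.swap_apply_of_ne_of_ne (emb_ne_va _) ?_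
  intro h; exact (hf j).1 (emb_inj h)

lemma HH_b : HH f hf k vb = emb ⟨k.val, hk⟩ := by
  unfold HH
  rw [dif_pos hk]
  simp only [Perm.mul_apply]
  rw [Equiv.swap_apply_of_ne_of_ne va_ne_vb.symm (Ne.symm (emb_ne_vb _))]
  simp only [g0_apply, ext0_vb]
  rw [Equiv.swap_apply_left]

lemma HH_embj : HH f hf k (emb ⟨k.val, hk⟩) = vb := by
  unfold HH
  rw [dif_pos hk]
  simp only [Perm.mul_apply]
  rw [Equiv.swap_apply_right]
  simp only [g0_apply, ext0_va]
  rw [Equiv.swap_apply_of_ne_of_ne va_ne_vb.symm (Ne.symm (emb_ne_vb _))]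

lemma HH_embfj : HH f hf k (emb (f ⟨k.val, hk⟩)) = va := by
  set j : Fin N := ⟨k.val, hk⟩
  unfold HH
  rw [dif_pos hk]
  simp only [Perm.mul_apply]
  rw [Equiv.swap_apply_of_ne_of_ne (emb_ne_va _) (fun h => (hf j).1 (emb_inj h))]
  simp only [g0_apply, ext0_emb, (hf j).2]
  rw [Equiv.swap_apply_right]

lemma HH_emb (x : Fin N) (h1 : x ≠ ⟨k.val, hk⟩) (h2 : x ≠ f ⟨k.val, hk⟩) :
    HH f hf k (emb x) = emb (f x) := by
  set j : Fin N := ⟨k.val, hk⟩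
  unfold HH
  rw [dif_pos hk]
  simp only [Perm.mul_apply]
  rw [Equiv.swap_apply_of_ne_of_ne (emb_ne_va _) (fun h => h1 (emb_inj h))]
  simp only [g0_apply, ext0_emb]
  refine Equiv.swap_apply_of_ne_of_ne (emb_ne_va _) ?_
  intro h
  apply h2
  have : f x = j := emb_inj h
  have := congrArg f this
  rwa [(hf x).2] at this

end HHvals

lemma HH_last_emb (f : Perm (Fin N)) (hf : IsPM f) (k : Fin (N + 1)) (hk : ¬ k.val < N)
    (x : Fin N) : HH f hf k (emb x) = emb (f x) := by
  unfold HH; rw [dif_neg hk]; exact ext0_emb f x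

lemma HH_last_b (f : Perm (Fin N)) (hf : IsPM f) (k : Fin (N + 1)) (hk : ¬ k.val < N) :
    HH f hf k vb = va := by
  unfold HH; rw [dif_neg hk]; simp

lemma HH_inj {f f' : Perm (Fin N)} (hf : IsPM f) (hf' : IsPM f') {k k' : Fin (N + 1)}
    (h : HH f hf k = HH f' hf' k') : f = f' ∧ k = k' := by
  have hval : ∀ x, HH f hf k x = HH f' hf' k' x := fun x => by rw [h]
  by_cases hk : k.val < N <;> by_cases hk' : k'.val < N
  · have hb := hval vb
    rw [HH_b f hf k hk, HH_b f' hf' k' hk'] at hb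
    have hkk : k = k' := by
      apply Fin.ext
      simpa using congrArg Fin.val hb
    subst hkk
    have hfj : f ⟨k.val, hk⟩ = f' ⟨k.val, hk⟩ := by
      have ha := hval va
      rw [HH_a f hf k hk, HH_a f' hf' k hk'] at ha
      exact emb_inj ha
    refine ⟨Equiv.ext fun x => ?_, rfl⟩
    by_cases h1 : x = ⟨k.val, hk⟩
    · rw [h1, hfj]
    by_cases h2 : x = f ⟨k.val, hk⟩
    · rw [h2, (hf ⟨k.val, hk⟩).2, hfj, (hf' ⟨k.val, hk⟩).2]
    · have h2' : x ≠ f' ⟨k.val, hk⟩ := by rw [← hfj]; exact h2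
      have he := hval (emb x)
      rw [HH_emb f hf k hk x h1 h2, HH_emb f' hf' k hk' x h1 h2'] at he
      exact emb_inj he
  · exfalso
    have hb := hval vb
    rw [HH_b f hf k hk, HH_last_b f' hf' k' hk'] at hb
    exact emb_ne_va _ hb
  · exfalso
    have hb := hval vb
    rw [HH_last_b f hf k hk, HH_b f' hf' k' hk'] at hb
    exact emb_ne_va _ hb.symm
  · have hkk : k = k' := by
      apply Fin.ext
      have := k.isLt; have := k'.isLt; omega
    refine ⟨Equiv.ext fun x => ?_, hkk⟩
    have he := hval (emb x)
    rw [HH_last_emb f hf k hk x, HH_last_emb f' hf' k' hk' x] at he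
    exact emb_inj he

lemma HH_extends {f : Perm (Fin N)} {hf : IsPM f} {k : Fin (N + 1)}
    {M : Finset (Fin N × Fin N)}
    (h : Extends (HH f hf k) (M.image embedEdge)) : Extends f M := by
  intro p hp
  have hmem : embedEdge p ∈ M.image embedEdge := Finset.mem_image_of_mem _ hp
  have he : HH f hf k (emb p.1) = emb p.2 := h _ hmem
  by_cases hk : k.val < N
  · by_cases h1 : p.1 = ⟨k.val, hk⟩
    · rw [h1, HH_embj f hf k hk] at he
      exact absurd he.symm (emb_ne_vb _)
    by_cases h2 : p.1 = f ⟨k.val, hk⟩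
    · rw [h2, HH_embfj f hf k hk] at he
      exact absurd he.symm (emb_ne_va _)
    · rw [HH_emb f hf k hk p.1 h1 h2] at he
      exact emb_inj he
  · rw [HH_last_emb f hf k hk p.1] at he
    exact emb_inj he

/-! ### The restriction map -/

def rfun (g : Perm (Fin (N + 2))) (x : Fin N) : Fin (N + 2) :=
  if (g (emb x)).val < N then g (emb x) else if g (emb x) = va then g vb else g va

lemma rfun_pos (g : Perm (Fin (N + 2))) (x : Fin N) (h : (g (emb x)).val < N) :
    rfun g x = g (emb x) := by
  unfold rfun; rw [if_pos h]

lemma rfun_va (g : Perm (Fin (N + 2))) (x : Fin N) (h : g (emb x) = va) :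
    rfun g x = g vb := by
  unfold rfun
  rw [if_neg (by rw [h]; simp [va]), if_pos h]

lemma rfun_vb (g : Perm (Fin (N + 2))) (x : Fin N) (h : g (emb x) = vb) :
    rfun g x = g va := by
  unfold rfun
  rw [if_neg (by rw [h]; simp [vb]), if_neg (by rw [h]; exact va_ne_vb.symm)]

lemma apply_emb_ne (g : Perm (Fin (N + 2))) (x : Fin N)
    (h : ¬ (g (emb x)).val < N) (h2 : g (emb x) ≠ va) : g (emb x) = vb := by
  apply Fin.ext
  have := (g (emb x)).isLt
  have h3 : (g (emb x)).val ≠ N := fun hh => h2 (Fin.ext hh)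
  simp [vb]; omega

lemma gvb_lt (g : Perm (Fin (N + 2))) (hg : IsPM g) (h : g va ≠ vb) : (g vb).val < N := by
  have h1 : g vb ≠ vb := (hg vb).1
  have h2 : g vb ≠ va := by
    intro hh
    apply h
    have := congrArg g hh
    rw [(hg vb).2] at this
    exact this.symm
  have := (g vb).isLt
  have e1 : (g vb).val ≠ N + 1 := fun hh => h1 (Fin.ext hh)
  have e2 : (g vb).val ≠ N := fun hh => h2 (Fin.ext hh)
  omega

lemma gva_lt (g : Perm (Fin (N + 2))) (hg : IsPM g) (h : g va ≠ vb) : (g va).val < N := by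
  have h1 : g va ≠ va := (hg va).1
  have := (g va).isLt
  have e1 : (g va).val ≠ N + 1 := fun hh => h (Fin.ext hh)
  have e2 : (g va).val ≠ N := fun hh => h1 (Fin.ext hh)
  omega

lemma rfun_lt (g : Perm (Fin (N + 2))) (hg : IsPM g) (x : Fin N) : (rfun g x).val < N := by
  by_cases h1 : (g (emb x)).val < N
  · rw [rfun_pos g x h1]; exact h1
  by_cases h2 : g (emb x) = va
  · rw [rfun_va g x h2]
    apply gvb_lt g hg
    intro hvb
    have hgva : g va = emb x := by
      have := congrArg g h2
      rw [(hg _).2] at this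
      exact this.symm
    rw [hgva] at hvb
    exact emb_ne_vb x hvb
  · have h3 := apply_emb_ne g x h1 h2
    rw [rfun_vb g x h3]
    apply gva_lt g hg
    intro hvb
    have hgvb : g vb = emb x := by
      have := congrArg g h3
      rw [(hg _).2] at this
      exact this.symm
    have : g vb = va := by
      have := congrArg g hvb
      rw [(hg va).2] at this
      exact this.symm
    rw [this] at hgvb
    exact emb_ne_va x hgvb.symm

lemma rfun_rfun (g : Perm (Fin (N + 2))) (hg : IsPM g) (x : Fin N) :
    rfun g ⟨(rfun g x).val, rfun_lt g hg x⟩ = emb x := by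
  have hembx' : emb (⟨(rfun g x).val, rfun_lt g hg x⟩ : Fin N) = rfun g x := Fin.ext rfl
  by_cases h1 : (g (emb x)).val < N
  · have hr : rfun g x = g (emb x) := rfun_pos g x h1
    rw [rfun_pos g _ (by rw [hembx', hr, (hg (emb x)).2]; exact x.isLt)]
    rw [hembx', hr, (hg (emb x)).2]
  by_cases h2 : g (emb x) = va
  · have hr : rfun g x = g vb := rfun_va g x h2
    have hgva : g va = emb x := by
      have := congrArg g h2
      rw [(hg _).2] at this
      exact this.symm
    rw [rfun_vb g _ (by rw [hembx', hr, (hg vb).2])]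
    exact hgva
  · have h3 := apply_emb_ne g x h1 h2
    have hr : rfun g x = g va := rfun_vb g x h3
    have hgvb : g vb = emb x := by
      have := congrArg g h3
      rw [(hg _).2] at this
      exact this.symm
    rw [rfun_va g _ (by rw [hembx', hr, (hg va).2])]
    exact hgvb

lemma rperm_aux_invol (g : Perm (Fin (N + 2))) (hg : IsPM g) :
    Function.Involutive (fun x : Fin N => (⟨(rfun g x).val, rfun_lt g hg x⟩ : Fin N)) := by
  intro x
  apply Fin.ext
  show (rfun g ⟨(rfun g x).val, rfun_lt g hg x⟩).val = x.val
  rw [rfun_rfun g hg x]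
  rfl

def rperm (g : Perm (Fin (N + 2))) (hg : IsPM g) : Perm (Fin N) :=
  Function.Involutive.toPerm _ (rperm_aux_invol g hg)

lemma rperm_apply (g : Perm (Fin (N + 2))) (hg : IsPM g) (x : Fin N) :
    rperm g hg x = ⟨(rfun g x).val, rfun_lt g hg x⟩ := rfl

lemma rfun_ne (g : Perm (Fin (N + 2))) (hg : IsPM g) (x : Fin N) : rfun g x ≠ emb x := by
  by_cases h1 : (g (emb x)).val < N
  · rw [rfun_pos g x h1]; exact (hg (emb x)).1
  by_cases h2 : g (emb x) = va
  · rw [rfun_va g x h2]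
    intro hh
    have : g (emb x) = vb := by
      have := congrArg g hh
      rw [(hg vb).2] at this
      exact this.symm
    rw [h2] at this
    exact va_ne_vb this
  · have h3 := apply_emb_ne g x h1 h2
    rw [rfun_vb g x h3]
    intro hh
    have : g (emb x) = va := by
      have := congrArg g hh
      rw [(hg va).2] at this
      exact this.symm
    rw [h3] at this
    exact va_ne_vb this.symm

lemma isPM_rperm (g : Perm (Fin (N + 2))) (hg : IsPM g) : IsPM (rperm g hg) := by
  intro x
  constructor
  · rw [rperm_apply]
    intro hh
    apply rfun_ne g hg x
    have := congrArg Fin.val hh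
    exact Fin.ext this
  · exact rperm_aux_invol g hg x

def kof (g : Perm (Fin (N + 2))) (hg : IsPM g) : Fin (N + 1) :=
  if h : g va = vb then Fin.last N else ⟨(g vb).val, by have := gvb_lt g hg h; omega⟩

lemma kof_last_iff (g : Perm (Fin (N + 2))) (hg : IsPM g) :
    kof g hg = Fin.last N ↔ g va = vb := by
  constructor
  · intro h
    by_contra hh
    unfold kof at h
    rw [dif_neg hh] at h
    have h5 : (g vb).val = N := congrArg Fin.val h
    have := gvb_lt g hg hh
    omega
  · intro h; unfold kof; rw [dif_pos h]

lemma r_inj {g g' : Perm (Fin (N + 2))} (hg : IsPM g) (hg' : IsPM g')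
    (h1 : rperm g hg = rperm g' hg') (h2 : kof g hg = kof g' hg') : g = g' := by
  have hr : ∀ x : Fin N, rfun g x = rfun g' x := by
    intro x
    have := congrArg Fin.val (congrArg (fun (e : Perm (Fin N)) => e x) h1)
    simp only [rperm_apply] at this
    exact Fin.ext this
  by_cases hab : g va = vb
  · have hab' : g' va = vb := by
      rw [← kof_last_iff g' hg']
      rw [← h2, kof_last_iff g hg]
      exact hab
    have hba : g vb = va := by
      have h6 := congrArg g hab
      rw [(hg va).2] at h6
      exact h6.symm
    have hba' : g' vb = va := by
      have h6 := congrArg g' hab'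
      rw [(hg' va).2] at h6
      exact h6.symm
    have hemb : ∀ (gg : Perm (Fin (N + 2))), IsPM gg → gg va = vb → gg vb = va →
        ∀ x : Fin N, (gg (emb x)).val < N := by
      intro gg hgg e1 e2 x
      have f1 : gg (emb x) ≠ va := by
        intro hh
        have := congrArg gg hh
        rw [(hgg _).2, e1] at this
        exact emb_ne_vb x this
      have f2 : gg (emb x) ≠ vb := by
        intro hh
        have := congrArg gg hh
        rw [(hgg _).2, e2] at this
        exact emb_ne_va x this
      have := (gg (emb x)).isLt
      have d1 : (gg (emb x)).val ≠ N := fun hh => f1 (Fin.ext hh)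
      have d2 : (gg (emb x)).val ≠ N + 1 := fun hh => f2 (Fin.ext hh)
      omega
    apply Equiv.ext
    intro y
    rcases cases3 y with ⟨x, rfl⟩ | rfl | rfl
    · have := hr x
      rwa [rfun_pos g x (hemb g hg hab hba x), rfun_pos g' x (hemb g' hg' hab' hba' x)] at this
    · rw [hab, hab']
    · rw [hba, hba']
  · have hab' : g' va ≠ vb := by
      intro hh
      rw [← kof_last_iff g' hg'] at hh
      rw [← h2, kof_last_iff g hg] at hh
      exact hab hh
    have hvb : g vb = g' vb := by
      unfold kof at h2
      rw [dif_neg hab, dif_neg hab'] at h2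
      apply Fin.ext
      simpa using congrArg Fin.val h2
    set j : Fin N := ⟨(g vb).val, gvb_lt g hg hab⟩ with hj
    have hembj : emb j = g vb := Fin.ext rfl
    have hgej : g (emb j) = vb := by
      rw [hembj]; exact (hg vb).2
    have hgej' : g' (emb j) = vb := by
      rw [hembj, hvb]; exact (hg' vb).2
    have hva : g va = g' va := by
      have := hr j
      rwa [rfun_vb g j hgej, rfun_vb g' j hgej'] at this
    set m : Fin N := ⟨(g va).val, gva_lt g hg hab⟩ with hm
    have hembm : emb m = g va := Fin.ext rfl
    have hgem : g (emb m) = va := by rw [hembm]; exact (hg va).2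
    have hgem' : g' (emb m) = va := by rw [hembm, hva]; exact (hg' va).2
    apply Equiv.ext
    intro y
    rcases cases3 y with ⟨x, rfl⟩ | rfl | rfl
    · by_cases hxj : x = j
      · rw [hxj, hgej, hgej']
      by_cases hxm : x = m
      · rw [hxm, hgem, hgem']
      · have e1 : g (emb x) ≠ va := by
          intro hh
          apply hxm
          have := congrArg g hh
          rw [(hg _).2] at this
          apply emb_inj
          rw [hembm, ← this]
        have e2 : g (emb x) ≠ vb := by
          intro hh
          apply hxj
          have := congrArg g hh
          rw [(hg _).2] at this
          apply emb_inj
          rw [hembj, ← this]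
        have e1' : g' (emb x) ≠ va := by
          intro hh
          apply hxm
          have := congrArg g' hh
          rw [(hg' _).2] at this
          apply emb_inj
          rw [hembm, hva, ← this]
        have e2' : g' (emb x) ≠ vb := by
          intro hh
          apply hxj
          have := congrArg g' hh
          rw [(hg' _).2] at this
          apply emb_inj
          rw [hembj, hvb, ← this]
        have l1 : (g (emb x)).val < N := by
          have := (g (emb x)).isLt
          have d1 : (g (emb x)).val ≠ N := fun hh => e1 (Fin.ext hh)
          have d2 : (g (emb x)).val ≠ N + 1 := fun hh => e2 (Fin.ext hh)
          omega
        have l2 : (g' (emb x)).val < N := by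
          have := (g' (emb x)).isLt
          have d1 : (g' (emb x)).val ≠ N := fun hh => e1' (Fin.ext hh)
          have d2 : (g' (emb x)).val ≠ N + 1 := fun hh => e2' (Fin.ext hh)
          omega
        have := hr x
        rwa [rfun_pos g x l1, rfun_pos g' x l2] at this
    · exact hva
    · exact hvb

/-! ### Counting -/

lemma card_PM2_le :
    Nat.card {g : Perm (Fin (N + 2)) // IsPM g} ≤ (N + 1) * Nat.card {f : Perm (Fin N) // IsPM f} := by
  have hinj : Function.Injective
      (fun gp : {g : Perm (Fin (N + 2)) // IsPM g} =>
        ((kof gp.1 gp.2, ⟨rperm gp.1 gp.2, isPM_rperm gp.1 gp.2⟩) :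
          Fin (N + 1) × {f : Perm (Fin N) // IsPM f})) := by
    rintro ⟨g, hg⟩ ⟨g', hg'⟩ hh
    simp only [Prod.mk.injEq, Subtype.mk.injEq] at hh
    exact Subtype.ext (r_inj hg hg' hh.2 hh.1)
  have := Nat.card_le_card_of_injective _ hinj
  simpa [Nat.card_prod] using this

lemma card_avoid_le (𝓜 : Finset (Finset (Fin N × Fin N))) :
    (N + 1) * Nat.card {f : Perm (Fin N) // IsPM f ∧ ∀ M ∈ 𝓜, ¬ Extends f M} ≤
      Nat.card {g : Perm (Fin (N + 2)) //
        IsPM g ∧ ∀ M ∈ 𝓜, ¬ Extends g (M.image embedEdge)} := by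
  have hinj : Function.Injective
      (fun p : Fin (N + 1) × {f : Perm (Fin N) // IsPM f ∧ ∀ M ∈ 𝓜, ¬ Extends f M} =>
        (⟨HH p.2.1 p.2.2.1 p.1,
          ⟨isPM_HH _ p.2.2.1 p.1, fun M hM hext => p.2.2.2 M hM (HH_extends hext)⟩⟩ :
          {g : Perm (Fin (N + 2)) // IsPM g ∧ ∀ M ∈ 𝓜, ¬ Extends g (M.image embedEdge)})) := by
    rintro ⟨k, f, hf⟩ ⟨k', f', hf'⟩ hh
    simp only [Subtype.mk.injEq] at hh
    obtain ⟨hff, hkk⟩ := HH_inj hf.1 hf'.1 hh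
    simp only [Prod.mk.injEq, Subtype.mk.injEq]
    exact ⟨hkk, hff⟩
  have := Nat.card_le_card_of_injective _ hinj
  simpa [Nat.card_prod] using this

lemma pm_nonempty (hN : Even N) : Nonempty {f : Perm (Fin N) // IsPM f} := by
  obtain ⟨m, hm⟩ := hN
  have hbound : ∀ x : Fin N, 2 * (x.val / 2) + (1 - x.val % 2) < N := by
    intro x; have := x.isLt; omega
  have hinv : Function.Involutive
      (fun x : Fin N => (⟨2 * (x.val / 2) + (1 - x.val % 2), hbound x⟩ : Fin N)) := by
    intro x
    apply Fin.ext
    show 2 * ((2 * (x.val / 2) + (1 - x.val % 2)) / 2) +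
      (1 - (2 * (x.val / 2) + (1 - x.val % 2)) % 2) = x.val
    omega
  refine ⟨⟨hinv.toPerm, fun x => ⟨?_, hinv x⟩⟩⟩
  show (⟨2 * (x.val / 2) + (1 - x.val % 2), hbound x⟩ : Fin N) ≠ x
  intro hh
  have h5 : 2 * (x.val / 2) + (1 - x.val % 2) = x.val := congrArg Fin.val hh
  omega

end MMA

/-- For any collection `𝓜` of partial matchings of `K_N` (`N` even),
`Pr(∧_{M ∈ 𝓜} ¬A_M^N) ≤ Pr(∧_{M ∈ 𝓜} ¬A_M^{N+2})`, the probabilities being over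
uniform random perfect matchings of `K_N` and of `K_{N+2}` respectively. -/
theorem matching_monotone_avoidance (N : ℕ) (hN : Even N)
    (𝓜 : Finset (Finset (Fin N × Fin N)))
    (h𝓜 : ∀ M ∈ 𝓜, IsPartialMatching M) :
    (Nat.card {f : Equiv.Perm (Fin N) // IsPM f ∧ ∀ M ∈ 𝓜, ¬ Extends f M} : ℚ) /
        Nat.card {f : Equiv.Perm (Fin N) // IsPM f}
      ≤ (Nat.card {f : Equiv.Perm (Fin (N + 2)) //
            IsPM f ∧ ∀ M ∈ 𝓜, ¬ Extends f (M.image embedEdge)} : ℚ) /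
        Nat.card {f : Equiv.Perm (Fin (N + 2)) // IsPM f} := by
  classical
  set A := Nat.card {f : Equiv.Perm (Fin N) // IsPM f ∧ ∀ M ∈ 𝓜, ¬ Extends f M} with hA
  set P := Nat.card {f : Equiv.Perm (Fin N) // IsPM f} with hP
  set A' := Nat.card {f : Equiv.Perm (Fin (N + 2)) //
      IsPM f ∧ ∀ M ∈ 𝓜, ¬ Extends f (M.image embedEdge)} with hA'
  set P' := Nat.card {f : Equiv.Perm (Fin (N + 2)) // IsPM f} with hP'
  have h1 : (N + 1) * A ≤ A' := MMA.card_avoid_le 𝓜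
  have h2 : P' ≤ (N + 1) * P := MMA.card_PM2_le
  have hPpos : 0 < P := by
    have := MMA.pm_nonempty hN
    exact Nat.card_pos
  have hP'pos : 0 < P' := by
    have := MMA.pm_nonempty (N := N + 2) (by exact hN.add (by decide))
    exact Nat.card_pos
  rw [div_le_div_iff₀ (by exact_mod_cast hPpos) (by exact_mod_cast hP'pos)]
  have key : A * P' ≤ A' * P := by
    calc A * P' ≤ A * ((N + 1) * P) := Nat.mul_le_mul_left _ h2
    _ = ((N + 1) * A) * P := by ring
    _ ≤ A' * P := Nat.mul_le_mul_right _ h1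
  exact_mod_cast key
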